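/- For natural numbers s < N, there exists a family U of subsets of {1,...,N} such that every set in U has exactly s elements, any two distinct sets I, J ∈ U satisfy |I ∩ J| < s/2, and |U| ≥ (N/(4s))^{s/2}. -/

import Mathlib

open Finset

private lemma choose_le_two_pow' (n k : ℕ) : n.choose k ≤ 2 ^ n := by
  rcases le_or_gt k n with h | h
  · calc n.choose k ≤ ∑ i ∈ Finset.range (n + 1), n.choose i :=
        Finset.single_le_sum (fun i _ => Nat.zero_le _)
          (Finset.mem_range.2 (Nat.lt_succ_of_le h))
    _ = 2 ^ n := Nat.sum_range_choose n
  · simp [Nat.choose_eq_zero_of_lt h]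

/-- There is a large family of `s`-element subsets of `{1,…,N}` with pairwise
intersections of size `< s/2`, of cardinality at least `(N/(4s))^{s/2}`. -/
theorem exists_separated_family {N s : ℕ} (hs : s < N) :
    ∃ U : Finset (Finset (Fin N)),
      (∀ I ∈ U, I.card = s) ∧
      (∀ I ∈ U, ∀ J ∈ U, I ≠ J → ((I ∩ J).card : ℝ) < s / 2) ∧
      ((N : ℝ) / (4 * s)) ^ ((s : ℝ) / 2) ≤ (U.card : ℝ) := by
  classical
  rcases Nat.eq_zero_or_pos s with rfl | hs1
  · -- trivial case s = 0
    refine ⟨{∅}, by simp, ?_, ?_⟩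
    · intro I hI J hJ hne
      simp only [Finset.mem_singleton] at hI hJ
      exact absurd (hI.trans hJ.symm) hne
    · simp
  by_cases hbig : 4 * s < N
  swap
  · -- N ≤ 4 s : a single set suffices
    push_neg at hbig
    obtain ⟨I, _, hIcard⟩ := Finset.exists_subset_card_eq
      (show s ≤ (Finset.univ : Finset (Fin N)).card by simpa using hs.le)
    refine ⟨{I}, by simp [hIcard], ?_, ?_⟩
    · intro I' hI' J hJ hne
      simp only [Finset.mem_singleton] at hI' hJ
      exact absurd (hI'.trans hJ.symm) hne
    · have h0 : (0:ℝ) ≤ (N:ℝ) / (4 * s) := by positivity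
      have h1 : (N:ℝ) / (4 * s) ≤ 1 := by
        rw [div_le_one (by positivity)]
        exact_mod_cast hbig
      calc ((N:ℝ)/(4*s)) ^ ((s:ℝ)/2) ≤ 1 := Real.rpow_le_one h0 h1 (by positivity)
        _ ≤ (({I} : Finset (Finset (Fin N))).card : ℝ) := by simp
  -- main case : s ≥ 1, N > 4 s
  set k := (s + 1) / 2 with hk
  have hks : k ≤ s := by omega
  have hsk : s ≤ 2 * k := by omega
  have hsN : s ≤ N := hs.le
  set A : Finset (Finset (Fin N)) := Finset.powersetCard s Finset.univ with hA
  have hAcard : A.card = N.choose s := by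
    rw [hA, Finset.card_powersetCard, Finset.card_univ, Fintype.card_fin]
  have hAmem : ∀ J, J ∈ A ↔ J.card = s := by
    intro J; simp [hA, Finset.mem_powersetCard]
  set S : Finset (Finset (Finset (Fin N))) :=
    A.powerset.filter (fun U => ∀ I ∈ U, ∀ J ∈ U, I ≠ J → 2 * (I ∩ J).card < s) with hS
  have hSne : S.Nonempty := ⟨∅, by simp [hS]⟩
  obtain ⟨U, hUS, hUmax⟩ := S.exists_max_image Finset.card hSne
  rw [hS, Finset.mem_filter, Finset.mem_powerset] at hUS
  obtain ⟨hUA, hUpair⟩ := hUS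
  -- maximality gives a covering property
  have hcover : ∀ J ∈ A, ∃ I ∈ U, k ≤ (I ∩ J).card := by
    intro J hJ
    by_contra hcon
    push_neg at hcon
    have hJU : J ∉ U := by
      intro hJU
      have := hcon J hJU
      rw [Finset.inter_self, (hAmem J).1 hJ] at this
      omega
    have hnew : insert J U ∈ S := by
      rw [hS, Finset.mem_filter, Finset.mem_powerset]
      refine ⟨Finset.insert_subset hJ hUA, ?_⟩
      intro I₁ h₁ I₂ h₂ hne
      rcases Finset.mem_insert.1 h₁ with e₁ | h₁'
      · rcases Finset.mem_insert.1 h₂ with e₂ | h₂'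
        · exact absurd (e₁.trans e₂.symm) hne
        · have := hcon I₂ h₂'
          rw [e₁, Finset.inter_comm]
          omega
      · rcases Finset.mem_insert.1 h₂ with e₂ | h₂'
        · have := hcon I₁ h₁'
          rw [e₂]
          omega
        · exact hUpair _ h₁' _ h₂' hne
    have := hUmax _ hnew
    rw [Finset.card_insert_of_notMem hJU] at this
    omega
  have hsub : A ⊆ U.biUnion (fun I => A.filter (fun J => k ≤ (I ∩ J).card)) := by
    intro J hJ
    obtain ⟨I, hI, hIJ⟩ := hcover J hJ
    exact Finset.mem_biUnion.2 ⟨I, hI, Finset.mem_filter.2 ⟨hJ, hIJ⟩⟩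
  -- bound the number of "bad" sets for a fixed I
  have hbadcard : ∀ I ∈ U,
      (A.filter (fun J => k ≤ (I ∩ J).card)).card ≤ s.choose k * (N - k).choose (s - k) := by
    intro I hI
    have hIcard : I.card = s := (hAmem I).1 (hUA hI)
    have hsub2 : A.filter (fun J => k ≤ (I ∩ J).card) ⊆
        (I.powersetCard k).biUnion (fun T => A.filter (fun J => T ⊆ J)) := by
      intro J hJ
      rw [Finset.mem_filter] at hJ
      obtain ⟨T, hTsub, hTcard⟩ := Finset.exists_subset_card_eq hJ.2
      exact Finset.mem_biUnion.2 ⟨T,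
        Finset.mem_powersetCard.2 ⟨hTsub.trans Finset.inter_subset_left, hTcard⟩,
        Finset.mem_filter.2 ⟨hJ.1, hTsub.trans Finset.inter_subset_right⟩⟩
    have hcount : ∀ T ∈ I.powersetCard k,
        (A.filter (fun J => T ⊆ J)).card ≤ (N - k).choose (s - k) := by
      intro T hT
      have hTk : T.card = k := (Finset.mem_powersetCard.1 hT).2
      have : (A.filter (fun J => T ⊆ J)).card ≤
          ((Finset.univ \ T).powersetCard (s - k)).card := by
        apply Finset.card_le_card_of_injOn (fun J => J \ T)
        · intro J hJ
          rw [Finset.mem_coe, Finset.mem_filter] at hJ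
          rw [Finset.mem_coe, Finset.mem_powersetCard]
          refine ⟨Finset.sdiff_subset_sdiff (Finset.subset_univ _) le_rfl, ?_⟩
          rw [Finset.card_sdiff_of_subset hJ.2, (hAmem J).1 hJ.1, hTk]
        · intro J₁ h₁ J₂ h₂ hEq
          have t₁ := (Finset.mem_filter.1 (Finset.mem_coe.1 h₁)).2
          have t₂ := (Finset.mem_filter.1 (Finset.mem_coe.1 h₂)).2
          have := congrArg (· ∪ T) hEq
          simpa [Finset.sdiff_union_of_subset t₁, Finset.sdiff_union_of_subset t₂] using this
      calc (A.filter (fun J => T ⊆ J)).card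
          ≤ ((Finset.univ \ T).powersetCard (s - k)).card := this
        _ = (N - k).choose (s - k) := by
            rw [Finset.card_powersetCard, Finset.card_sdiff_of_subset (Finset.subset_univ T),
              Finset.card_univ, Fintype.card_fin, hTk]
    calc (A.filter (fun J => k ≤ (I ∩ J).card)).card
        ≤ ((I.powersetCard k).biUnion (fun T => A.filter (fun J => T ⊆ J))).card :=
          Finset.card_le_card hsub2
      _ ≤ ∑ T ∈ I.powersetCard k, (A.filter (fun J => T ⊆ J)).card := Finset.card_biUnion_le
      _ ≤ ∑ _T ∈ I.powersetCard k, (N - k).choose (s - k) := Finset.sum_le_sum hcount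
      _ = s.choose k * (N - k).choose (s - k) := by
          rw [Finset.sum_const, Finset.card_powersetCard, hIcard, smul_eq_mul]
  have hmain : N.choose s ≤ U.card * (s.choose k * (N - k).choose (s - k)) := by
    calc N.choose s = A.card := hAcard.symm
      _ ≤ (U.biUnion (fun I => A.filter (fun J => k ≤ (I ∩ J).card))).card :=
          Finset.card_le_card hsub
      _ ≤ ∑ I ∈ U, (A.filter (fun J => k ≤ (I ∩ J).card)).card := Finset.card_biUnion_le
      _ ≤ ∑ _I ∈ U, s.choose k * (N - k).choose (s - k) := Finset.sum_le_sum hbadcard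
      _ = U.card * (s.choose k * (N - k).choose (s - k)) := by
          rw [Finset.sum_const, smul_eq_mul]
  -- binomial identity to cancel
  have hid : N.choose s * s.choose k = N.choose k * (N - k).choose (s - k) :=
    Nat.choose_mul hks
  have hNk : N.choose k ≤ U.card * s.choose k ^ 2 := by
    have hpos : 0 < (N - k).choose (s - k) := Nat.choose_pos (by omega)
    have h2 : N.choose k * (N - k).choose (s - k) ≤
        U.card * s.choose k ^ 2 * (N - k).choose (s - k) := by
      rw [← hid]
      calc N.choose s * s.choose k
          ≤ U.card * (s.choose k * (N - k).choose (s - k)) * s.choose k :=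
            Nat.mul_le_mul_right _ hmain
        _ = U.card * s.choose k ^ 2 * (N - k).choose (s - k) := by ring
    exact Nat.le_of_mul_le_mul_right h2 hpos
  -- the product inequality N^k * C(s,k) ≤ s^k * C(N,k)
  have hprod : N ^ k * s.choose k ≤ s ^ k * N.choose k := by
    have h1 : Nat.factorial k * (N ^ k * s.choose k) ≤ Nat.factorial k * (s ^ k * N.choose k) := by
      have e1 : Nat.factorial k * (N ^ k * s.choose k) = N ^ k * s.descFactorial k := by
        rw [Nat.descFactorial_eq_factorial_mul_choose]; ring
      have e2 : Nat.factorial k * (s ^ k * N.choose k) = s ^ k * N.descFactorial k := by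
        rw [Nat.descFactorial_eq_factorial_mul_choose]; ring
      rw [e1, e2, Nat.descFactorial_eq_prod_range, Nat.descFactorial_eq_prod_range]
      calc N ^ k * ∏ i ∈ Finset.range k, (s - i)
          = ∏ i ∈ Finset.range k, N * (s - i) := by
            rw [Finset.prod_mul_distrib, Finset.prod_const, Finset.card_range]
        _ ≤ ∏ i ∈ Finset.range k, s * (N - i) := by
            apply Finset.prod_le_prod' 
            intro i hi
            have hik : i < k := Finset.mem_range.1 hi
            have his : i ≤ s := le_of_lt (lt_of_lt_of_le hik hks)
            rw [Nat.mul_sub, Nat.mul_sub]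
            calc N * s - N * i ≤ N * s - s * i :=
                  Nat.sub_le_sub_left (Nat.mul_le_mul_right i hsN) _
              _ = s * N - s * i := by rw [Nat.mul_comm N s]
        _ = s ^ k * ∏ i ∈ Finset.range k, (N - i) := by
            rw [Finset.prod_mul_distrib, Finset.prod_const, Finset.card_range]
    exact Nat.le_of_mul_le_mul_left h1 (Nat.factorial_pos k)
  have hc4 : s.choose k ≤ 4 ^ k := by
    calc s.choose k ≤ 2 ^ s := choose_le_two_pow' s k
      _ ≤ 2 ^ (2 * k) := Nat.pow_le_pow_right (by norm_num) hsk
      _ = 4 ^ k := by rw [pow_mul]; norm_num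
  have hfinal : N ^ k ≤ 4 ^ k * s ^ k * U.card := by
    have h2 : N ^ k * s.choose k ^ 2 ≤ 4 ^ k * s ^ k * N.choose k := by
      calc N ^ k * s.choose k ^ 2 = (N ^ k * s.choose k) * s.choose k := by ring
        _ ≤ (s ^ k * N.choose k) * 4 ^ k := Nat.mul_le_mul hprod hc4
        _ = 4 ^ k * s ^ k * N.choose k := by ring
    have h3 : N ^ k * s.choose k ^ 2 ≤ (4 ^ k * s ^ k * U.card) * s.choose k ^ 2 := by
      calc N ^ k * s.choose k ^ 2 ≤ 4 ^ k * s ^ k * (U.card * s.choose k ^ 2) :=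
            le_trans h2 (Nat.mul_le_mul_left _ hNk)
        _ = (4 ^ k * s ^ k * U.card) * s.choose k ^ 2 := by ring
    exact Nat.le_of_mul_le_mul_right h3 (pow_pos (Nat.choose_pos hks) 2)
  -- conclude
  refine ⟨U, fun I hI => (hAmem I).1 (hUA hI), ?_, ?_⟩
  · intro I hI J hJ hne
    have h := hUpair I hI J hJ hne
    have h' : (2:ℝ) * ((I ∩ J).card : ℝ) < (s : ℝ) := by exact_mod_cast h
    linarith
  · have hspos : (0:ℝ) < 4 * (s:ℝ) := by positivity
    have hbase1 : (1:ℝ) ≤ (N:ℝ) / (4 * s) := by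
      rw [le_div_iff₀ hspos, one_mul]
      exact_mod_cast (by omega : 4 * s ≤ N)
    have hk' : ((N:ℝ) / (4 * s)) ^ (k:ℕ) ≤ (U.card : ℝ) := by
      rw [div_pow, div_le_iff₀ (by positivity)]
      calc (N:ℝ) ^ k ≤ ((4 ^ k * s ^ k * U.card : ℕ) : ℝ) := by exact_mod_cast hfinal
        _ = (U.card : ℝ) * (4 * (s:ℝ)) ^ k := by push_cast; ring
    calc ((N:ℝ)/(4*s)) ^ ((s:ℝ)/2)
        ≤ ((N:ℝ)/(4*s)) ^ ((k:ℕ):ℝ) := by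
          apply Real.rpow_le_rpow_of_exponent_le hbase1
          have : (s:ℝ) ≤ 2 * (k:ℕ) := by exact_mod_cast hsk
          push_cast
          linarith
      _ = ((N:ℝ)/(4*s)) ^ (k:ℕ) := Real.rpow_natCast _ k
      _ ≤ (U.card : ℝ) := hk'
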